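/- Let 0 < α < 1 and let h̄ : ℝ → ℝ be the function defined from h ∈ C(ℝ,ℝ) odd with h(s) ≥ 0 for s ≥ 0 by h̄(s) = s^{p₀} sup_{0<t<s} h(t)/t^{p₀} for s > 0, h̄(0)=0, h̄(-s) = -h̄(s), where p₀ > 1. Then for all s ∈ ℝ: 0 ≤ (p₀+1) H̄(s) ≤ s h̄(s), where H̄(s) = ∫₀^s h̄(t)dt. -/

import Mathlib

open Real Set

/-- Let `h` be continuous, odd, nonnegative on `[0,∞)`, `p₀ > 1`, and let `h̄` be
defined by `h̄(s) = s^{p₀} sup_{0<t<s} h(t)/t^{p₀}` for `s > 0`, `h̄(0) = 0`, and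
oddness, assumed finite and continuous.  Then with `H̄(s) = ∫₀^s h̄`, for all `s`:
`0 ≤ (p₀+1)H̄(s) ≤ s h̄(s)`. -/
theorem stmt10 (α p₀ : ℝ) (hα0 : 0 < α) (hα1 : α < 1) (hp₀ : 1 < p₀)
    (h hbar : ℝ → ℝ)
    (hc : Continuous h) (hodd : ∀ s, h (-s) = - h s)
    (hpos : ∀ s, 0 ≤ s → 0 ≤ h s)
    (hbar0 : hbar 0 = 0)
    (hbarpos : ∀ s, 0 < s →
      hbar s = s ^ p₀ * sSup ((fun t => h t / t ^ p₀) '' Ioo (0:ℝ) s))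
    (hbarodd : ∀ s, hbar (-s) = - hbar s)
    (hbarc : Continuous hbar)
    (hbdd : ∀ s, 0 < s → BddAbove ((fun t => h t / t ^ p₀) '' Ioo (0:ℝ) s))
    (Hbar : ℝ → ℝ) (hH : ∀ s, Hbar s = ∫ t in (0:ℝ)..s, hbar t) :
    ∀ s : ℝ, 0 ≤ (p₀ + 1) * Hbar s ∧ (p₀ + 1) * Hbar s ≤ s * hbar s := by
  have hp0 : (0:ℝ) < p₀ := by linarith
  have hp1 : (0:ℝ) < p₀ + 1 := by linarith
  -- hbar is nonnegative on [0,∞)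
  have hnonneg : ∀ s : ℝ, 0 ≤ s → 0 ≤ hbar s := by
    intro s hs
    rcases eq_or_lt_of_le hs with h0 | h0
    · rw [← h0, hbar0]
    · rw [hbarpos s h0]
      have hmem : (s/2) ∈ Ioo (0:ℝ) s := ⟨by linarith, by linarith⟩
      have h1 : (0:ℝ) ≤ h (s/2) / (s/2) ^ p₀ :=
        div_nonneg (hpos _ (by linarith)) (Real.rpow_nonneg (by linarith) _)
      have h2 : h (s/2) / (s/2) ^ p₀ ≤
          sSup ((fun t => h t / t ^ p₀) '' Ioo (0:ℝ) s) :=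
        le_csSup (hbdd s h0) ⟨s/2, hmem, rfl⟩
      exact mul_nonneg (Real.rpow_nonneg h0.le _) (h1.trans h2)
  -- the key pointwise bound
  have hkey : ∀ s : ℝ, 0 < s → ∀ t ∈ Icc (0:ℝ) s,
      hbar t ≤ t ^ p₀ * (hbar s / s ^ p₀) := by
    intro s hs t ht
    have hsp : (0:ℝ) < s ^ p₀ := Real.rpow_pos_of_pos hs _
    have hCeq : hbar s / s ^ p₀ = sSup ((fun t => h t / t ^ p₀) '' Ioo (0:ℝ) s) := by
      rw [hbarpos s hs]; field_simp
    rcases eq_or_lt_of_le ht.1 with h0 | h0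
    · rw [← h0, hbar0, Real.zero_rpow (ne_of_gt hp0), zero_mul]
    · rcases eq_or_lt_of_le ht.2 with hts | hts
      · rw [hts, hCeq, ← hbarpos s hs]
      · rw [hbarpos t h0, hCeq]
        have hsub : ((fun t => h t / t ^ p₀) '' Ioo (0:ℝ) t) ⊆
            ((fun t => h t / t ^ p₀) '' Ioo (0:ℝ) s) :=
          image_mono (Ioo_subset_Ioo le_rfl hts.le)
        have hne : ((fun t => h t / t ^ p₀) '' Ioo (0:ℝ) t).Nonempty :=
          (nonempty_Ioo.mpr h0).image _
        have hle := csSup_le_csSup (hbdd s hs) hne hsub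
        exact mul_le_mul_of_nonneg_left hle (Real.rpow_nonneg h0.le _)
  -- the result for s ≥ 0
  have key : ∀ s : ℝ, 0 ≤ s → 0 ≤ (p₀ + 1) * Hbar s ∧ (p₀ + 1) * Hbar s ≤ s * hbar s := by
    intro s hs
    rcases eq_or_lt_of_le hs with h0 | h0
    · rw [← h0, hH]; simp
    · have hHnn : 0 ≤ Hbar s := by
        rw [hH]
        exact intervalIntegral.integral_nonneg hs (fun t ht => hnonneg t ht.1)
      constructor
      · exact mul_nonneg hp1.le hHnn
      · set C : ℝ := hbar s / s ^ p₀ with hC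
        have hsp : (0:ℝ) < s ^ p₀ := Real.rpow_pos_of_pos h0 _
        have hCnn : 0 ≤ C := div_nonneg (hnonneg s hs) hsp.le
        have hint1 : IntervalIntegrable hbar MeasureTheory.volume 0 s :=
          hbarc.intervalIntegrable _ _
        have hint2 : IntervalIntegrable (fun t : ℝ => t ^ p₀ * C)
            MeasureTheory.volume 0 s :=
          (intervalIntegral.intervalIntegrable_rpow (Or.inl (by linarith))).mul_const C
        have hmono : Hbar s ≤ ∫ t in (0:ℝ)..s, t ^ p₀ * C := by
          rw [hH]
          exact intervalIntegral.integral_mono_on hs hint1 hint2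
            (fun t ht => hkey s h0 t ht)
        have hval : (∫ t in (0:ℝ)..s, t ^ p₀ * C) = s ^ (p₀ + 1) / (p₀ + 1) * C := by
          rw [intervalIntegral.integral_mul_const,
            integral_rpow (Or.inl (by linarith)),
            Real.zero_rpow (by positivity)]
          ring
        have hfin : s ^ (p₀ + 1) = s ^ p₀ * s := Real.rpow_add_one (ne_of_gt h0) p₀
        have : (p₀ + 1) * Hbar s ≤ (p₀ + 1) * (s ^ (p₀ + 1) / (p₀ + 1) * C) := by
          apply mul_le_mul_of_nonneg_left _ hp1.le
          rw [← hval]; exact hmono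
        calc (p₀ + 1) * Hbar s ≤ (p₀ + 1) * (s ^ (p₀ + 1) / (p₀ + 1) * C) := this
          _ = s ^ (p₀ + 1) * C := by field_simp
          _ = s * hbar s := by
              rw [hfin, hC]; field_simp
      -- end
  intro s
  rcases le_or_gt 0 s with hs | hs
  · exact key s hs
  · -- s < 0 : reduce to -s via evenness of Hbar and oddness of hbar
    set u := -s with hu
    have hu0 : 0 < u := by simp [hu]; linarith
    have hHeven : Hbar s = Hbar u := by
      rw [hH, hH]
      have h1 : (∫ x in (0:ℝ)..u, hbar (-x)) = ∫ x in (-u)..(0:ℝ), hbar x := by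
        have := intervalIntegral.integral_comp_neg (a := 0) (b := u) hbar
        simpa using this
      have h2 : (∫ x in (0:ℝ)..u, hbar (-x)) = ∫ x in (0:ℝ)..u, -hbar x := by
        congr 1; ext x; rw [hbarodd]
      have hsu : s = -u := by simp [hu]
      rw [hsu, intervalIntegral.integral_symm (-u) 0, ← h1, h2,
        intervalIntegral.integral_neg, neg_neg]
    have hprod : s * hbar s = u * hbar u := by
      have hsu : s = -u := by simp [hu]
      rw [hsu, hbarodd]; ring
    rw [hHeven, hprod]
    exact key u hu0.le
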